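/- If NPr_ε(μ) holds for all μ < λ and cf(λ) = ω, then NPr_{ε+1}(λ) holds. -/

import Mathlib

open FirstOrder Cardinal

attribute [local instance] Classical.propDecidable

section Rank
variable (L : Language) (M : Type) [L.Structure M]

/-- The condition for `rk(w) ≥ 0`: every quantifier-free formula satisfied by an
injective enumeration of `w` admits uncountably many replacements at each coordinate. -/
def RkBase (w : Finset M) : Prop :=
  ∀ (n : ℕ) (v : Fin n → M), Function.Injective v → Set.range v = ↑w →
    ∀ φ : L.Formula (Fin n), φ.IsQF → φ.Realize v →
      ∀ k : Fin n, ¬ ({a : M | φ.Realize (Function.update v k a)}).Countable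

/-- The successor condition for `rk`, relative to a predicate `rk` standing for "rank ≥ β". -/
def RkSuccCond (rk : Finset M → Prop) (w : Finset M) : Prop :=
  ∀ (n : ℕ) (v : Fin n → M), Function.Injective v → Set.range v = ↑w →
    ∀ φ : L.Formula (Fin n), φ.IsQF → φ.Realize v →
      ∀ k : Fin n, ∃ a : M, a ∉ w ∧ rk (insert a w) ∧
        φ.Realize (Function.update v k a)

/-- `RkGe L M w α` says `rk(w, 𝕄) ≥ α`. -/
def RkGe (w : Finset M) (α : Ordinal) : Prop :=
  RkBase L M w ∧ ∀ β : Ordinal, β < α → RkSuccCond L M (fun w' => RkGe w' β) w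
termination_by α

/-- The successor condition for `rk*`: an `ω₁`-sequence of witnesses. -/
def RkStarSuccCond (rk : Finset M → Prop) (w : Finset M) : Prop :=
  ∀ (n : ℕ) (v : Fin n → M), Function.Injective v → Set.range v = ↑w →
    ∀ φ : L.Formula (Fin n), φ.IsQF → φ.Realize v →
      ∀ k : Fin n, ∃ a : Ordinal.{0} → M,
        Set.InjOn a {i : Ordinal.{0} | i < (Cardinal.aleph 1).ord} ∧
        a 0 = v k ∧
        (∀ i : Ordinal.{0}, i < (Cardinal.aleph 1).ord → a i ∉ w.erase (v k)) ∧
        (∀ i : Ordinal.{0}, i < (Cardinal.aleph 1).ord → φ.Realize (Function.update v k (a i))) ∧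
        (∀ i j : Ordinal.{0}, i < j → j < (Cardinal.aleph 1).ord →
          rk (insert (a i) (insert (a j) (w.erase (v k)))))

/-- `RkStarGe L M w α` says `rk*(w, 𝕄) ≥ α`. -/
def RkStarGe (w : Finset M) (α : Ordinal) : Prop :=
  RkBase L M w ∧ ∀ β : Ordinal, β < α → RkStarSuccCond L M (fun w' => RkStarGe w' β) w
termination_by α

end Rank

/-- `NPr ε λ`: there is a model on a universe of size `λ` with countable relational
vocabulary all of whose finite nonempty subsets have rank `< ε`. -/
def NPr (ε : Ordinal) (lam : Cardinal) : Prop :=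
  ∃ (M : Type) (L : FirstOrder.Language.{0,0}) (S : L.Structure M),
    Cardinal.mk M = lam ∧ (∀ n, Countable (L.Relations n)) ∧
    (∀ n, IsEmpty (L.Functions n)) ∧
    ∀ w : Finset M, w.Nonempty → ¬ @RkGe L M S w ε

/-- `NPr* ε λ`, the analogue of `NPr` for the rank `rk*`. -/
def NPrStar (ε : Ordinal) (lam : Cardinal) : Prop :=
  ∃ (M : Type) (L : FirstOrder.Language.{0,0}) (S : L.Structure M),
    Cardinal.mk M = lam ∧ (∀ n, Countable (L.Relations n)) ∧
    (∀ n, IsEmpty (L.Functions n)) ∧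
    ∀ w : Finset M, w.Nonempty → ¬ @RkStarGe L M S w ε

theorem rkGe_iff (L : Language) (M : Type) [L.Structure M] (w : Finset M) (α : Ordinal) :
    RkGe L M w α ↔ RkBase L M w ∧ ∀ β : Ordinal, β < α →
      RkSuccCond L M (fun w' => RkGe L M w' β) w := by
  rw [RkGe]

namespace StmtSeven
open FirstOrder.Language

/-- Disjoint sum of countably many relational languages, plus extra unary-style predicates. -/
def sumLang (L₁ : ℕ → FirstOrder.Language.{0,0}) : FirstOrder.Language.{0,0} where
  Functions := fun _ => Empty
  Relations := fun m => (Σ n : ℕ, (L₁ n).Relations m) ⊕ ℕ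

def bigStructure (L₁ : ℕ → FirstOrder.Language.{0,0}) (M₁ : ℕ → Type) (S₁ : ∀ n, (L₁ n).Structure (M₁ n))
    (M : Type) (A : ℕ → Set M) (e : ∀ n, M₁ n ≃ A n) : (sumLang L₁).Structure M where
  funMap := fun F _ => Empty.elim F
  RelMap := fun {m} r x =>
    match r with
    | Sum.inl ⟨n, R⟩ => ∃ h : ∀ i, x i ∈ A n, (S₁ n).RelMap R fun i => (e n).symm ⟨x i, h i⟩
    | Sum.inr n => ∀ i, x i ∈ A n

def toSumLang (L₁ : ℕ → FirstOrder.Language.{0,0}) (n : ℕ) (hE : ∀ m, IsEmpty ((L₁ n).Functions m)) :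
    L₁ n →ᴸ sumLang L₁ where
  onFunction := fun {m} F => ((hE m).false F).elim
  onRelation := fun {m} R => Sum.inl ⟨n, R⟩

section Generic
variable {LL L₀ : FirstOrder.Language.{0,0}} {M M₀ : Type} [SM : LL.Structure M] [S₀ : L₀.Structure M₀]
variable (Φ : L₀ →ᴸ LL) (j : M₀ → M)

theorem term_transfer (hfun : ∀ k, IsEmpty (L₀.Functions k)) {γ : Type} (u : γ → M₀)
    (t : L₀.Term γ) : (Φ.onTerm t).realize (j ∘ u) = j (t.realize u) := by
  induction t with
  | var i => rfl
  | func F ts ih => exact ((hfun _).false F).elim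

theorem onBoundedFormula_isQF {γ : Type} {k : ℕ} {ψ : L₀.BoundedFormula γ k} (hψ : ψ.IsQF) :
    (Φ.onBoundedFormula ψ).IsQF := by
  induction hψ with
  | falsum => exact BoundedFormula.isQF_bot
  | of_isAtomic h =>
    cases h with
    | equal t₁ t₂ => exact (BoundedFormula.IsAtomic.equal _ _).isQF
    | rel R ts => exact (BoundedFormula.IsAtomic.rel _ _).isQF
  | imp h1 h2 ih1 ih2 => exact ih1.imp ih2

theorem qf_transfer (hj : Function.Injective j)
    (hfun : ∀ k, IsEmpty (L₀.Functions k))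
    (hrel : ∀ {k : ℕ} (R : L₀.Relations k) (x : Fin k → M₀),
      Structure.RelMap (Φ.onRelation R) (j ∘ x) ↔ Structure.RelMap R x)
    {γ : Type} {k : ℕ} {ψ : L₀.BoundedFormula γ k} (hψ : ψ.IsQF) :
    ∀ (v : γ → M₀) (xs : Fin k → M₀),
      (Φ.onBoundedFormula ψ).Realize (j ∘ v) (j ∘ xs) ↔ ψ.Realize v xs := by
  induction hψ with
  | falsum => intro v xs; exact Iff.rfl
  | of_isAtomic h =>
    intro v xs
    have hs : Sum.elim (j ∘ v) (j ∘ xs) = j ∘ Sum.elim v xs := by funext x; cases x <;> rfl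
    cases h with
    | equal t₁ t₂ =>
      show (Φ.onTerm t₁).realize (Sum.elim (j ∘ v) (j ∘ xs))
            = (Φ.onTerm t₂).realize (Sum.elim (j ∘ v) (j ∘ xs))
          ↔ t₁.realize (Sum.elim v xs) = t₂.realize (Sum.elim v xs)
      rw [hs, term_transfer Φ j hfun, term_transfer Φ j hfun]
      exact ⟨fun hh => hj hh, fun hh => congrArg j hh⟩
    | rel R ts =>
      show Structure.RelMap (Φ.onRelation R)
            (fun i => ((Φ.onTerm ∘ ts) i).realize (Sum.elim (j ∘ v) (j ∘ xs)))
          ↔ Structure.RelMap R fun i => (ts i).realize (Sum.elim v xs)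
      rw [hs]
      have ht : (fun i => Term.realize (j ∘ Sum.elim v xs) ((Φ.onTerm ∘ ts) i))
          = j ∘ fun i => Term.realize (Sum.elim v xs) (ts i) :=
        funext fun i => term_transfer Φ j hfun _ _
      rw [ht]
      exact hrel R _
  | imp h1 h2 ih1 ih2 =>
    intro v xs
    simp only [LHom.onBoundedFormula, BoundedFormula.realize_imp, ih1 v xs, ih2 v xs]

theorem qf_formula_transfer (hj : Function.Injective j)
    (hfun : ∀ k, IsEmpty (L₀.Functions k))
    (hrel : ∀ {k : ℕ} (R : L₀.Relations k) (x : Fin k → M₀),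
      Structure.RelMap (Φ.onRelation R) (j ∘ x) ↔ Structure.RelMap R x)
    {γ : Type} {ψ : L₀.Formula γ} (hψ : ψ.IsQF) (v : γ → M₀) :
    (Φ.onFormula ψ).Realize (j ∘ v) ↔ ψ.Realize v := by
  have hd : (default : Fin 0 → M) = j ∘ (default : Fin 0 → M₀) := funext fun x => x.elim0
  unfold Formula.Realize
  rw [hd]
  exact qf_transfer Φ j hj hfun hrel hψ v default

theorem rk_transfer (hj : Function.Injective j)
    (hfun : ∀ k, IsEmpty (L₀.Functions k))
    (hrel : ∀ {k : ℕ} (R : L₀.Relations k) (x : Fin k → M₀),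
      Structure.RelMap (Φ.onRelation R) (j ∘ x) ↔ Structure.RelMap R x)
    (p : LL.Relations 1)
    (hp : ∀ a : M, Structure.RelMap p ![a] ↔ a ∈ Set.range j) :
    ∀ (α : Ordinal) (w : Finset M₀), RkGe LL M (w.image j) α → RkGe L₀ M₀ w α := by
  intro α
  induction α using Ordinal.induction with
  | h α IH =>
  intro w hw
  rw [rkGe_iff] at hw ⊢
  obtain ⟨hbase, hsucc⟩ := hw
  have hupd : ∀ {m : ℕ} (v : Fin m → M₀) (k : Fin m) (b : M₀),
      Function.update (j ∘ v) k (j b) = j ∘ Function.update v k b := by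
    intro m v k b; funext i
    by_cases hik : i = k
    · subst hik; simp
    · simp [Function.update_of_ne hik]
  constructor
  · -- base condition
    intro m v hinj hrange ψ hQF hreal k hcnt
    set χ : LL.Formula (Fin m) := Φ.onFormula ψ ⊓ p.formula₁ (Term.var k) with hχ
    have hPre : ∀ u : Fin m → M,
        χ.Realize u ↔ ((Φ.onFormula ψ).Realize u ∧ u k ∈ Set.range j) := by
      intro u
      rw [hχ, Formula.realize_inf, Formula.realize_rel₁, hp]
      simp [Term.realize]
    have h1 : Function.Injective (j ∘ v) := hj.comp hinj
    have h2 : Set.range (j ∘ v) = ↑(w.image j) := by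
      rw [Set.range_comp, hrange, Finset.coe_image]
    have hQF' : χ.IsQF :=
      (onBoundedFormula_isQF Φ hQF).inf (BoundedFormula.IsAtomic.rel _ _).isQF
    have hreal' : χ.Realize (j ∘ v) := by
      rw [hPre]
      exact ⟨(qf_formula_transfer Φ j hj hfun hrel hQF v).mpr hreal, ⟨v k, rfl⟩⟩
    refine hbase m (j ∘ v) h1 h2 χ hQF' hreal' k ?_
    have hset : {a : M | χ.Realize (Function.update (j ∘ v) k a)}
        = j '' {b : M₀ | ψ.Realize (Function.update v k b)} := by
      ext a
      simp only [Set.mem_setOf_eq, Set.mem_image]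
      rw [hPre, Function.update_self]
      constructor
      · rintro ⟨hφ, b, rfl⟩
        rw [hupd v k b] at hφ
        exact ⟨b, (qf_formula_transfer Φ j hj hfun hrel hQF _).mp hφ, rfl⟩
      · rintro ⟨b, hb, rfl⟩
        rw [hupd v k b]
        exact ⟨(qf_formula_transfer Φ j hj hfun hrel hQF _).mpr hb, ⟨b, rfl⟩⟩
    rw [hset]
    exact hcnt.image j
  · -- successor condition
    intro β hβ m v hinj hrange ψ hQF hreal k
    set χ : LL.Formula (Fin m) := Φ.onFormula ψ ⊓ p.formula₁ (Term.var k) with hχ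
    have hPre : ∀ u : Fin m → M,
        χ.Realize u ↔ ((Φ.onFormula ψ).Realize u ∧ u k ∈ Set.range j) := by
      intro u
      rw [hχ, Formula.realize_inf, Formula.realize_rel₁, hp]
      simp [Term.realize]
    have h1 : Function.Injective (j ∘ v) := hj.comp hinj
    have h2 : Set.range (j ∘ v) = ↑(w.image j) := by
      rw [Set.range_comp, hrange, Finset.coe_image]
    have hQF' : χ.IsQF :=
      (onBoundedFormula_isQF Φ hQF).inf (BoundedFormula.IsAtomic.rel _ _).isQF
    have hreal' : χ.Realize (j ∘ v) := by
      rw [hPre]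
      exact ⟨(qf_formula_transfer Φ j hj hfun hrel hQF v).mpr hreal, ⟨v k, rfl⟩⟩
    obtain ⟨a, ha_nm, ha_rk, ha_real⟩ := hsucc β hβ m (j ∘ v) h1 h2 χ hQF' hreal' k
    rw [hPre, Function.update_self] at ha_real
    obtain ⟨hφ, b, rfl⟩ := ha_real
    refine ⟨b, fun hbw => ha_nm (Finset.mem_image_of_mem j hbw), ?_, ?_⟩
    · apply IH β hβ
      rwa [Finset.image_insert]
    · rw [hupd v k b] at hφ
      exact (qf_formula_transfer Φ j hj hfun hrel hQF _).mp hφ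

end Generic
end StmtSeven

/-- If NPr_ε(μ) for all μ < λ and cf(λ) = ω, then NPr_{ε+1}(λ). -/
theorem stmt_7 (ε : Ordinal) (lam : Cardinal)
    (h : ∀ μ : Cardinal, μ < lam → NPr ε μ)
    (hcf : lam.ord.cof = Cardinal.aleph0) :
    NPr (ε + 1) lam := by
  have hinf : ℵ₀ ≤ lam := hcf ▸ Ordinal.cof_ord_le lam
  have hlim : Order.IsSuccLimit lam.ord := Cardinal.isSuccLimit_ord hinf
  -- a monotone cofinal sequence in lam.ord
  obtain ⟨ι, f, hlsub, hι⟩ := Ordinal.exists_lsub_cof lam.ord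
  rw [hcf] at hι
  obtain ⟨eι⟩ : Nonempty (ℕ ≃ ι) := Cardinal.eq.mp (Cardinal.mk_nat.trans hι.symm)
  set g : ℕ → Ordinal := fun n => (Finset.range (n + 1)).sup (fun i => f (eι i)) + 1 with hg
  have hglt : ∀ n, g n < lam.ord := by
    intro n
    show ((Finset.range (n + 1)).sup fun i => f (eι i)) + 1 < lam.ord
    rw [Ordinal.add_one_eq_succ]
    apply hlim.succ_lt
    apply (Finset.sup_lt_iff (by exact hlim.bot_lt)).mpr
    intro i _
    rw [← hlsub]
    exact Ordinal.lt_lsub _ _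
  have hgmono : Monotone g := by
    intro a b hab
    show ((Finset.range (a + 1)).sup fun i => f (eι i)) + 1
        ≤ ((Finset.range (b + 1)).sup fun i => f (eι i)) + 1
    rw [Ordinal.add_one_eq_succ, Ordinal.add_one_eq_succ]
    exact Order.succ_le_succ (Finset.sup_mono (Finset.range_subset_range.mpr (by omega)))
  have hgcof : ∀ x, x < lam.ord → ∃ n, x < g n := by
    intro x hx
    rw [← hlsub, Ordinal.lt_lsub_iff] at hx
    obtain ⟨i, hi⟩ := hx
    refine ⟨eι.symm i, lt_of_le_of_lt ?_ (lt_add_one _)⟩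
    calc x ≤ f i := hi
    _ = f (eι (eι.symm i)) := by rw [Equiv.apply_symm_apply]
    _ ≤ _ := Finset.le_sup (f := fun j => f (eι j)) (Finset.self_mem_range_succ _)
  -- the universe and its filtration
  set M : Type := lam.ord.ToType with hM
  set E := Ordinal.ToType.mk (o := lam.ord) with hE
  set A : ℕ → Set M := fun n => {x | (E.symm x : Ordinal) < g n} with hA
  have cover : ∀ x : M, ∃ n, x ∈ A n := fun x => hgcof (E.symm x) (E.symm x).2
  have mono : ∀ {a b : ℕ}, a ≤ b → A a ⊆ A b := fun hab x hx =>
    show (E.symm x : Ordinal) < g _ from lt_of_lt_of_le hx (hgmono hab)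
  have hAcard : ∀ n, #(A n) < lam := by
    intro n
    have hinj : Function.Injective (fun x : A n =>
        Ordinal.ToType.mk (o := g n) ⟨(E.symm x.1 : Ordinal), x.2⟩) := by
      intro a b hab
      apply Subtype.ext
      have h2 : (⟨(E.symm a.1 : Ordinal), a.2⟩ : Set.Iio (g n))
          = ⟨(E.symm b.1 : Ordinal), b.2⟩ := (Ordinal.ToType.mk (o := g n)).injective hab
      have h3 : E.symm a.1 = E.symm b.1 := Subtype.ext (Subtype.mk_eq_mk.mp h2)
      have := congrArg E h3
      rwa [E.apply_symm_apply, E.apply_symm_apply] at this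
    calc #(A n) ≤ #((g n).ToType) := Cardinal.mk_le_of_injective hinj
    _ = (g n).card := Cardinal.mk_toType _
    _ < lam := Cardinal.lt_ord.mp (hglt n)
  -- choose witnessing models
  have hN : ∀ n : ℕ, NPr ε #(A n) := fun n => h _ (hAcard n)
  choose M₁ L₁ S₁ hmk hcount hfunc hnork using hN
  have he : ∀ n, M₁ n ≃ A n := fun n => (Cardinal.eq.mp (hmk n)).some
  set e := he with he'
  set SM : (StmtSeven.sumLang L₁).Structure M := StmtSeven.bigStructure L₁ M₁ S₁ M A e with hSM
  refine ⟨M, StmtSeven.sumLang L₁, SM, ?_, ?_, ?_, ?_⟩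
  · rw [hM, Cardinal.mk_toType, Cardinal.card_ord]
  · intro m
    haveI : ∀ n, Countable ((L₁ n).Relations m) := fun n => hcount n m
    exact inferInstanceAs (Countable ((Σ n, (L₁ n).Relations m) ⊕ ℕ))
  · exact fun m => inferInstanceAs (IsEmpty Empty)
  · intro w hwne hRk
    -- weaken rank to ε
    have hRkε : @RkGe (StmtSeven.sumLang L₁) M SM w ε := by
      rw [rkGe_iff] at hRk ⊢
      exact ⟨hRk.1, fun β hβ => hRk.2 β (hβ.trans (lt_add_one ε))⟩
    obtain ⟨n, hn⟩ : ∃ n, ∀ x ∈ w, x ∈ A n := by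
      choose F hF using cover
      exact ⟨w.sup F, fun x hx => mono (Finset.le_sup hx) (hF x)⟩
    letI : (L₁ n).Structure (M₁ n) := S₁ n
    set Φ : L₁ n →ᴸ StmtSeven.sumLang L₁ := StmtSeven.toSumLang L₁ n (hfunc n) with hΦ
    set j : M₁ n → M := fun b => ((e n b : A n) : M) with hjdef
    have hj : Function.Injective j := fun a b hab => (e n).injective (Subtype.ext hab)
    have hj_symm : ∀ (y : M) (hy : y ∈ A n), j ((e n).symm ⟨y, hy⟩) = y :=
      fun y hy => congrArg Subtype.val ((e n).apply_symm_apply ⟨y, hy⟩)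
    have hrel : ∀ {k : ℕ} (R : (L₁ n).Relations k) (x : Fin k → M₁ n),
        Language.Structure.RelMap (Φ.onRelation R) (j ∘ x) ↔ Language.Structure.RelMap R x := by
      intro k R x
      show (∃ hh : ∀ i, j (x i) ∈ A n,
          (S₁ n).RelMap R fun i => (e n).symm ⟨j (x i), hh i⟩) ↔ _
      have hmem : ∀ i, j (x i) ∈ A n := fun i => (e n (x i)).2
      have hxi : ∀ (hh : ∀ i, j (x i) ∈ A n),
          (fun i => (e n).symm ⟨j (x i), hh i⟩) = x := by
        intro hh; funext i
        have h5 : (⟨j (x i), hh i⟩ : A n) = e n (x i) := Subtype.ext rfl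
        rw [h5, Equiv.symm_apply_apply]
      constructor
      · rintro ⟨hh, hr⟩; rwa [hxi hh] at hr
      · intro hr; exact ⟨hmem, by rwa [hxi hmem]⟩
    have hp : ∀ a : M, @Language.Structure.RelMap (StmtSeven.sumLang L₁) M SM 1 (Sum.inr n) ![a]
        ↔ a ∈ Set.range j := by
      intro a
      show (∀ i : Fin 1, ![a] i ∈ A n) ↔ _
      constructor
      · intro hh
        have ha : a ∈ A n := by simpa using hh 0
        exact ⟨(e n).symm ⟨a, ha⟩, hj_symm a ha⟩
      · rintro ⟨b, rfl⟩ i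
        have : ![j b] i = j b := by simp [Matrix.cons_val_fin_one]
        rw [this]
        exact (e n b).2
    -- pull w back to M₁ n
    set w' : Finset (M₁ n) := w.attach.image (fun x => (e n).symm ⟨x.1, hn x.1 x.2⟩) with hw'
    have himg : w'.image j = w := by
      ext x
      constructor
      · intro hx
        obtain ⟨b, hb, rfl⟩ := Finset.mem_image.mp hx
        obtain ⟨y, -, rfl⟩ := Finset.mem_image.mp hb
        rw [hj_symm]
        exact y.2
      · intro hx
        exact Finset.mem_image.mpr ⟨(e n).symm ⟨x, hn x hx⟩,
          Finset.mem_image.mpr ⟨⟨x, hx⟩, Finset.mem_attach _ _, rfl⟩, hj_symm x _⟩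
    have hw'ne : w'.Nonempty :=
      ((Finset.attach_nonempty_iff).mpr hwne).image _
    refine hnork n w' hw'ne ?_
    refine StmtSeven.rk_transfer Φ j hj (hfunc n) hrel (Sum.inr n) hp ε w' ?_
    rwa [himg]
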